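/- Let H be a finite-dimensional complex inner product space and let T_1,…,T_n be commuting linear operators on H satisfying T_1 T_1^* + ⋯ + T_n T_n^* = I. Then each T_i is normal (T_i T_i^* = T_i^* T_i), i.e. (T_1,…,T_n) is a spherical unitary. -/

import Mathlib

open ContinuousLinearMap

open scoped ComplexConjugate

local notation "⟪" x ", " y "⟫" => @inner ℂ _ _ x y

/-- A commuting family of endomorphisms of a finite-dimensional complex vector space has a
common eigenvector inside any nonzero invariant subspace. -/
lemma sphu_common_eigenvector {V : Type*} [AddCommGroup V] [Module ℂ V]
    [FiniteDimensional ℂ V] :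
    ∀ (n : ℕ) (A : Fin n → V →ₗ[ℂ] V), (∀ i j (x : V), A i (A j x) = A j (A i x)) →
    ∀ (K : Submodule ℂ V), K ≠ ⊥ → (∀ i, ∀ x ∈ K, A i x ∈ K) →
    ∃ v ∈ K, v ≠ 0 ∧ ∃ μ : Fin n → ℂ, ∀ i, A i v = μ i • v := by
  intro n
  induction n with
  | zero =>
    intro A _ K hK hinv
    obtain ⟨v, hvK, hv0⟩ := K.ne_bot_iff.mp hK
    exact ⟨v, hvK, hv0, fun i => i.elim0, fun i => i.elim0⟩
  | succ m ih =>
    intro A hcomm K hK hinv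
    haveI : Nontrivial K := Submodule.nontrivial_iff_ne_bot.mpr hK
    set f : Module.End ℂ K := (A (Fin.last m)).restrict (hinv (Fin.last m)) with hf
    obtain ⟨μ0, hμ0⟩ := Module.End.exists_eigenvalue f
    obtain ⟨w, hw⟩ := hμ0.exists_hasEigenvector
    have hw' : A (Fin.last m) (w : V) = μ0 • (w : V) := by
      have h1 := hw.apply_eq_smul
      have h2 := congrArg (Subtype.val) h1
      simpa [hf, LinearMap.restrict_coe_apply] using h2
    set K' : Submodule ℂ V :=
      K ⊓ LinearMap.ker (A (Fin.last m) - μ0 • LinearMap.id) with hK'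
    have hmem : ∀ x : V, x ∈ K' ↔ x ∈ K ∧ A (Fin.last m) x = μ0 • x := by
      intro x
      simp [hK', Submodule.mem_inf, LinearMap.mem_ker, LinearMap.sub_apply,
        LinearMap.smul_apply, sub_eq_zero]
    have hK'bot : K' ≠ ⊥ := by
      rw [Submodule.ne_bot_iff]
      refine ⟨(w : V), (hmem _).mpr ⟨w.2, hw'⟩, ?_⟩
      simpa using hw.right
    have hinv' : ∀ i, ∀ x ∈ K', (A (Fin.castSucc i)) x ∈ K' := by
      intro i x hx
      obtain ⟨hxK, hxe⟩ := (hmem x).mp hx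
      refine (hmem _).mpr ⟨hinv _ _ hxK, ?_⟩
      rw [hcomm, hxe, map_smul]
    obtain ⟨v, hvK', hv0, μ', hμ'⟩ :=
      ih (fun i => A (Fin.castSucc i)) (fun i j x => hcomm _ _ x) K' hK'bot hinv'
    refine ⟨v, ((hmem v).mp hvK').1, hv0, Fin.snoc μ' μ0, ?_⟩
    intro i
    refine Fin.lastCases ?_ ?_ i
    · rw [Fin.snoc_last]
      exact ((hmem v).mp hvK').2
    · intro j
      rw [Fin.snoc_castSucc]
      exact hμ' j

section Main

variable {n : ℕ} {H : Type*} [NormedAddCommGroup H] [InnerProductSpace ℂ H]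
    [FiniteDimensional ℂ H]

/-- Local step: if `v` lies in a nonzero joint eigenspace of the adjoints, then `v` is also a
joint eigenvector for the `T j` themselves (with conjugated eigenvalues). -/
lemma sphu_local_step (T : Fin n → H →L[ℂ] H)
    (hcomm : ∀ i j (x : H), T i (T j x) = T j (T i x))
    (hsum : ∀ x : H, ∑ i, T i (adjoint (T i) x) = x)
    (μ : Fin n → ℂ) (v₀ : H) (hv₀ : v₀ ≠ 0)
    (hv₀e : ∀ i, adjoint (T i) v₀ = μ i • v₀)
    (v : H) (hve : ∀ i, adjoint (T i) v = μ i • v) :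
    ∀ j, T j v = conj (μ j) • v := by
  -- the eigenvalue tuple lies on the unit sphere
  have hv₀sum : ∑ i, μ i • T i v₀ = v₀ := by
    have h := hsum v₀
    calc ∑ i, μ i • T i v₀ = ∑ i, T i (adjoint (T i) v₀) := by
          refine Finset.sum_congr rfl fun i _ => ?_
          rw [hv₀e i, map_smul]
      _ = v₀ := h
  have hS : ∑ i, μ i * conj (μ i) = 1 := by
    have key : (∑ i, μ i * conj (μ i)) * ⟪v₀, v₀⟫ = 1 * ⟪v₀, v₀⟫ := by
      rw [Finset.sum_mul, one_mul]
      calc ∑ i, μ i * conj (μ i) * ⟪v₀, v₀⟫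
          = ∑ i, ⟪v₀, μ i • T i v₀⟫ := by
            refine Finset.sum_congr rfl fun i _ => ?_
            rw [inner_smul_right, ← adjoint_inner_left, hv₀e i, inner_smul_left]
            ring
        _ = ⟪v₀, ∑ i, μ i • T i v₀⟫ := (inner_sum _ _ _).symm
        _ = ⟪v₀, v₀⟫ := by rw [hv₀sum]
    exact mul_right_cancel₀ (inner_self_ne_zero.mpr hv₀) key
  set c : Fin n → H := fun i => T i v - conj (μ i) • v with hc
  -- it suffices to show each `c j = 0`
  suffices hcz : ∀ j, c j = 0 by
    intro j
    have := hcz j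
    rw [hc] at this
    simpa [sub_eq_zero] using this
  have hvsum : ∑ i, μ i • T i v = v := by
    have h := hsum v
    calc ∑ i, μ i • T i v = ∑ i, T i (adjoint (T i) v) := by
          refine Finset.sum_congr rfl fun i _ => ?_
          rw [hve i, map_smul]
      _ = v := h
  have hcsum : ∑ i, μ i • c i = 0 := by
    rw [hc]
    simp only [smul_sub]
    rw [Finset.sum_sub_distrib, hvsum]
    have : ∑ i, μ i • conj (μ i) • v = ∑ i, (μ i * conj (μ i)) • v := by
      refine Finset.sum_congr rfl fun i _ => ?_
      rw [smul_smul]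
    rw [this, ← Finset.sum_smul, hS, one_smul, sub_self]
  have hcrel : ∀ i j, T i (c j) = conj (μ i) • c j + (T j (c i) - conj (μ j) • c i) := by
    have expand : ∀ i j, T i (c j) - conj (μ i) • c j
        = T i (T j v) - conj (μ j) • T i v - conj (μ i) • T j v
          + (conj (μ i) * conj (μ j)) • v := by
      intro i j
      simp only [hc]
      simp only [map_sub, map_smul, smul_sub, smul_smul]
      module
    intro i j
    have h : T i (c j) - conj (μ i) • c j = T j (c i) - conj (μ j) • c i := by
      rw [expand i j, expand j i, hcomm i j, mul_comm (conj (μ i)) (conj (μ j))]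
      abel
    rw [sub_eq_iff_eq_add] at h
    rw [h]
    abel
  have hBc : ∀ j, ∑ i, μ i • T i (c j) = c j := by
    intro j
    have step : ∀ i, μ i • T i (c j)
        = (μ i * conj (μ i)) • c j + (T j (μ i • c i) - conj (μ j) • (μ i • c i)) := by
      intro i
      rw [hcrel i j, map_smul]
      simp only [smul_add, smul_sub, smul_smul]
      module
    rw [Finset.sum_congr rfl fun i _ => step i]
    rw [Finset.sum_add_distrib, ← Finset.sum_smul, hS, one_smul]
    rw [Finset.sum_sub_distrib, ← map_sum, ← Finset.smul_sum, hcsum, map_zero, smul_zero,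
      sub_self, add_zero]
  -- each `c j` is itself a joint eigenvector of the adjoints
  have hadj : ∀ j i, adjoint (T i) (c j) = μ i • c j := by
    intro j
    set w : Fin n → H := fun i => adjoint (T i) (c j) - μ i • c j with hwdef
    have hS1 : ∑ i, ⟪adjoint (T i) (c j), adjoint (T i) (c j)⟫ = ⟪c j, c j⟫ := by
      calc ∑ i, ⟪adjoint (T i) (c j), adjoint (T i) (c j)⟫
          = ∑ i, ⟪c j, T i (adjoint (T i) (c j))⟫ := by
            refine Finset.sum_congr rfl fun i _ => ?_
            rw [adjoint_inner_left]
        _ = ⟪c j, ∑ i, T i (adjoint (T i) (c j))⟫ := (inner_sum _ _ _).symm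
        _ = ⟪c j, c j⟫ := by rw [hsum (c j)]
    have hS2 : ∑ i, ⟪adjoint (T i) (c j), μ i • c j⟫ = ⟪c j, c j⟫ := by
      calc ∑ i, ⟪adjoint (T i) (c j), μ i • c j⟫
          = ∑ i, ⟪c j, μ i • T i (c j)⟫ := by
            refine Finset.sum_congr rfl fun i _ => ?_
            rw [inner_smul_right, adjoint_inner_left, ← inner_smul_right]
        _ = ⟪c j, ∑ i, μ i • T i (c j)⟫ := (inner_sum _ _ _).symm
        _ = ⟪c j, c j⟫ := by rw [hBc j]
    have hS3 : ∑ i, ⟪μ i • c j, adjoint (T i) (c j)⟫ = ⟪c j, c j⟫ := by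
      have : ∑ i, ⟪μ i • c j, adjoint (T i) (c j)⟫
          = conj (∑ i, ⟪adjoint (T i) (c j), μ i • c j⟫) := by
        rw [map_sum]
        exact Finset.sum_congr rfl fun i _ => (inner_conj_symm _ _).symm
      rw [this, hS2, inner_conj_symm]
    have hS4 : ∑ i, ⟪μ i • c j, μ i • c j⟫ = ⟪c j, c j⟫ := by
      calc ∑ i, ⟪μ i • c j, μ i • c j⟫
          = ∑ i, (μ i * conj (μ i)) * ⟪c j, c j⟫ := by
            refine Finset.sum_congr rfl fun i _ => ?_
            rw [inner_smul_left, inner_smul_right]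
            ring
        _ = ⟪c j, c j⟫ := by rw [← Finset.sum_mul, hS, one_mul]
    have hw0 : ∑ i, ⟪w i, w i⟫ = 0 := by
      have : ∀ i, ⟪w i, w i⟫
          = ⟪adjoint (T i) (c j), adjoint (T i) (c j)⟫
            - ⟪adjoint (T i) (c j), μ i • c j⟫ - ⟪μ i • c j, adjoint (T i) (c j)⟫
            + ⟪μ i • c j, μ i • c j⟫ := fun i => inner_sub_sub_self _ _
      rw [Finset.sum_congr rfl fun i _ => this i]
      rw [Finset.sum_add_distrib, Finset.sum_sub_distrib, Finset.sum_sub_distrib,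
        hS1, hS2, hS3, hS4]
      ring
    have hnorm : ∑ i, (‖w i‖ : ℝ) ^ 2 = 0 := by
      have hterm : ∀ i, ⟪w i, w i⟫ = ((‖w i‖ : ℂ) ^ 2) := fun i => inner_self_eq_norm_sq_to_K _
      rw [Finset.sum_congr rfl fun i _ => hterm i] at hw0
      have hcast : ((∑ i, ‖w i‖ ^ 2 : ℝ) : ℂ) = 0 := by push_cast; exact hw0
      exact_mod_cast hcast
    intro i
    have : w i = 0 := by
      have hterm : (‖w i‖ : ℝ) ^ 2 = 0 := by
        have hnn : ∀ i ∈ Finset.univ, (0:ℝ) ≤ (‖w (i : Fin n)‖ : ℝ) ^ 2 :=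
          fun i _ => sq_nonneg _
        exact (Finset.sum_eq_zero_iff_of_nonneg hnn).mp hnorm i (Finset.mem_univ i)
      have : ‖w i‖ = 0 := by
        have := pow_eq_zero_iff (n := 2) (by norm_num) |>.mp hterm
        exact this
      simpa using this
    have := this
    rw [hwdef] at this
    simpa [sub_eq_zero] using this
  -- conclude `c j = 0`
  intro j
  have hinner : ⟪c j, c j⟫ = 0 := by
    have h1 : ⟪c j, T j v⟫ = conj (μ j) * ⟪c j, v⟫ := by
      rw [← adjoint_inner_left, hadj j j, inner_smul_left]
    have hcj : c j = T j v - conj (μ j) • v := rfl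
    calc ⟪c j, c j⟫ = ⟪c j, T j v⟫ - conj (μ j) * ⟪c j, v⟫ := by
          nth_rewrite 2 [hcj]
          rw [inner_sub_right, inner_smul_right]
      _ = 0 := by rw [h1, sub_self]
  exact inner_self_eq_zero.mp hinner

/-- Main induction: on any subspace invariant under all the adjoints, each `T i` commutes with
its adjoint pointwise. -/
lemma sphu_main_aux (T : Fin n → H →L[ℂ] H)
    (hcomm : ∀ i j (x : H), T i (T j x) = T j (T i x))
    (hacomm : ∀ i j (x : H), adjoint (T i) (adjoint (T j) x) = adjoint (T j) (adjoint (T i) x))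
    (hsum : ∀ x : H, ∑ i, T i (adjoint (T i) x) = x) :
    ∀ (d : ℕ) (K : Submodule ℂ H), Module.finrank ℂ K = d →
    (∀ i, ∀ x ∈ K, adjoint (T i) x ∈ K) →
    ∀ i, ∀ x ∈ K, T i (adjoint (T i) x) = adjoint (T i) (T i x) := by
  intro d
  induction d using Nat.strong_induction_on with
  | _ d IH =>
  intro K hd hinv i x hx
  rcases eq_or_ne K ⊥ with rfl | hKbot
  · rw [Submodule.mem_bot] at hx
    subst hx
    simp
  · obtain ⟨v₀, hv₀K, hv₀0, μ, hμ⟩ :=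
      sphu_common_eigenvector n (fun i => (adjoint (T i) : H →ₗ[ℂ] H))
        (fun i j x => hacomm i j x) K hKbot (fun i x hx => hinv i x hx)
    have hμ' : ∀ i', adjoint (T i') v₀ = μ i' • v₀ := fun i' => hμ i'
    set E : Submodule ℂ H :=
      K ⊓ (⨅ i', LinearMap.ker ((adjoint (T i') : H →ₗ[ℂ] H) - μ i' • LinearMap.id)) with hE
    have hmemE : ∀ y : H, y ∈ E ↔ y ∈ K ∧ ∀ i', adjoint (T i') y = μ i' • y := by
      intro y
      simp [hE, Submodule.mem_inf, Submodule.mem_iInf, LinearMap.mem_ker, LinearMap.sub_apply,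
        LinearMap.smul_apply, LinearMap.id_apply, sub_eq_zero]
    have hv₀E : v₀ ∈ E := (hmemE v₀).mpr ⟨hv₀K, hμ'⟩
    have hloc : ∀ y ∈ E, ∀ j, T j y = conj (μ j) • y := by
      intro y hy j
      exact sphu_local_step T hcomm hsum μ v₀ hv₀0 hμ' y ((hmemE y).mp hy).2 j
    set K' : Submodule ℂ H := K ⊓ Eᗮ with hK'
    have hK'le : K' ≤ K := inf_le_left
    have hv₀K' : v₀ ∉ K' := by
      intro hmem
      have h2 : v₀ ∈ Eᗮ := (Submodule.mem_inf.mp hmem).2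
      exact hv₀0 (inner_self_eq_zero.mp ((Submodule.mem_orthogonal E v₀).mp h2 v₀ hv₀E))
    have hlt : Module.finrank ℂ K' < d := by
      rw [← hd]
      exact Submodule.finrank_lt_finrank_of_lt
        (lt_of_le_of_ne hK'le fun h => hv₀K' (h ▸ hv₀K))
    have hinv' : ∀ i', ∀ y ∈ K', adjoint (T i') y ∈ K' := by
      intro i' y hy
      obtain ⟨hyK, hyO⟩ := Submodule.mem_inf.mp hy
      refine Submodule.mem_inf.mpr ⟨hinv i' y hyK, ?_⟩
      rw [Submodule.mem_orthogonal]
      intro u hu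
      rw [adjoint_inner_right, hloc u hu i', inner_smul_left,
        (Submodule.mem_orthogonal E y).mp hyO u hu, mul_zero]
    haveI : CompleteSpace E := FiniteDimensional.complete ℂ E
    set e : H := (E.orthogonalProjectionOnto x : H) with he
    have heE : e ∈ E := Submodule.coe_mem _
    have heK : e ∈ K := ((hmemE e).mp heE).1
    have hxe : x - e ∈ Eᗮ := E.sub_starProjection_mem_orthogonal x
    have hxeK' : x - e ∈ K' := Submodule.mem_inf.mpr ⟨K.sub_mem hx heK, hxe⟩
    have hIH := IH _ hlt K' rfl hinv' i (x - e) hxeK'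
    have heigen : adjoint (T i) e = μ i • e := ((hmemE e).mp heE).2 i
    have hTe : T i e = conj (μ i) • e := hloc e heE i
    have he1 : T i (adjoint (T i) e) = adjoint (T i) (T i e) := by
      rw [heigen, hTe, map_smul, map_smul, hTe, heigen, smul_smul, smul_smul, mul_comm]
    have hxsplit : x = e + (x - e) := by abel
    rw [hxsplit]
    simp only [map_add]
    rw [he1, hIH]

end Main

theorem stmt14 {n : ℕ} {H : Type*} [NormedAddCommGroup H] [InnerProductSpace ℂ H]
    [FiniteDimensional ℂ H]
    (T : Fin n → H →L[ℂ] H)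
    (hcomm : ∀ i j : Fin n, T i ∘L T j = T j ∘L T i)
    (hsum : ∑ i : Fin n, T i ∘L adjoint (T i) = 1) :
    ∀ i : Fin n, T i ∘L adjoint (T i) = adjoint (T i) ∘L T i := by
  have hcomm' : ∀ i j (x : H), T i (T j x) = T j (T i x) := by
    intro i j x
    have := congrArg (fun A : H →L[ℂ] H => A x) (hcomm i j)
    simpa using this
  have hsum' : ∀ x : H, ∑ i, T i (adjoint (T i) x) = x := by
    intro x
    have := congrArg (fun A : H →L[ℂ] H => A x) hsum
    simpa using this
  have hacomm : ∀ i j (x : H),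
      adjoint (T i) (adjoint (T j) x) = adjoint (T j) (adjoint (T i) x) := by
    intro i j x
    have h : adjoint (T j ∘L T i) = adjoint (T i ∘L T j) := by rw [hcomm]
    rw [adjoint_comp, adjoint_comp] at h
    have := congrArg (fun A : H →L[ℂ] H => A x) h
    simpa using this
  intro i
  ext x
  have := sphu_main_aux T hcomm' hacomm hsum' (Module.finrank ℂ (⊤ : Submodule ℂ H)) ⊤ rfl
    (fun _ _ _ => trivial) i x trivial
  simpa using this
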